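/- Let u, v, w be positive integers with gcd(u,v) = 1, u, v ≥ 2, w > 1, and let b ≥ 1. Let S = {1, u, v, uvw} and let (S) and (S^b) be the 4×4 matrices with entries gcd(x_i,x_j) and gcd(x_i,x_j)^b respectively (x_1 = 1, x_2 = u, x_3 = v, x_4 = uvw). Then (S)^{-1}(S^b) has integer entries if and only if Δ_1 := uvw - u - v + 1 divides Δ_b := (uvw)^b - u^b - v^b + 1. -/

import Mathlib

open Matrix Finset

set_option maxHeartbeats 1000000 in
private lemma inv4_aux (U V W : ℚ) (hU : U - 1 ≠ 0) (hV : V - 1 ≠ 0)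
    (hD : U * V * W - U - V + 1 ≠ 0) :
    !![1 + 1/(U-1) + 1/(V-1) + 1/(U*V*W-U-V+1), -(1/(U-1)) - 1/(U*V*W-U-V+1), -(1/(V-1)) - 1/(U*V*W-U-V+1), 1/(U*V*W-U-V+1);
       -(1/(U-1)) - 1/(U*V*W-U-V+1), 1/(U-1) + 1/(U*V*W-U-V+1), 1/(U*V*W-U-V+1), -(1/(U*V*W-U-V+1));
       -(1/(V-1)) - 1/(U*V*W-U-V+1), 1/(U*V*W-U-V+1), 1/(V-1) + 1/(U*V*W-U-V+1), -(1/(U*V*W-U-V+1));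
       1/(U*V*W-U-V+1), -(1/(U*V*W-U-V+1)), -(1/(U*V*W-U-V+1)), 1/(U*V*W-U-V+1)] *
    !![1, 1, 1, 1; 1, U, 1, U; 1, 1, V, V; 1, U, V, U*V*W] = 1 := by
  have hD1 : U * (V * W - 1) - V + 1 ≠ 0 := by intro h; apply hD; linarith
  have hD2 : V * (U * W - 1) - U + 1 ≠ 0 := by intro h; apply hD; linarith
  ext i j
  fin_cases i <;> fin_cases j <;>
    simp [Matrix.mul_apply, Fin.sum_univ_four, Matrix.one_apply, Matrix.vecHead,
      Matrix.vecTail] <;>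
    field_simp <;> ring

set_option maxHeartbeats 2000000 in
private lemma prod4_aux (U V W P Q R : ℚ) (hU : U - 1 ≠ 0) (hV : V - 1 ≠ 0)
    (hD : U * V * W - U - V + 1 ≠ 0) :
    !![1 + 1/(U-1) + 1/(V-1) + 1/(U*V*W-U-V+1), -(1/(U-1)) - 1/(U*V*W-U-V+1), -(1/(V-1)) - 1/(U*V*W-U-V+1), 1/(U*V*W-U-V+1);
       -(1/(U-1)) - 1/(U*V*W-U-V+1), 1/(U-1) + 1/(U*V*W-U-V+1), 1/(U*V*W-U-V+1), -(1/(U*V*W-U-V+1));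
       -(1/(V-1)) - 1/(U*V*W-U-V+1), 1/(U*V*W-U-V+1), 1/(V-1) + 1/(U*V*W-U-V+1), -(1/(U*V*W-U-V+1));
       1/(U*V*W-U-V+1), -(1/(U*V*W-U-V+1)), -(1/(U*V*W-U-V+1)), 1/(U*V*W-U-V+1)] *
    !![1, 1, 1, 1; 1, P, 1, P; 1, 1, Q, Q; 1, P, Q, R] =
    !![1, 1 - (P-1)/(U-1), 1 - (Q-1)/(V-1),
         1 - (P-1)/(U-1) - (Q-1)/(V-1) + (R-P-Q+1)/(U*V*W-U-V+1);
       0, (P-1)/(U-1), 0, (P-1)/(U-1) - (R-P-Q+1)/(U*V*W-U-V+1);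
       0, 0, (Q-1)/(V-1), (Q-1)/(V-1) - (R-P-Q+1)/(U*V*W-U-V+1);
       0, 0, 0, (R-P-Q+1)/(U*V*W-U-V+1)] := by
  ext i j
  fin_cases i <;> fin_cases j <;>
    simp [Matrix.mul_apply, Fin.sum_univ_four, Matrix.vecHead, Matrix.vecTail] <;>
    field_simp <;> ring

theorem stmt_18 (u v w b : ℕ) (hu : 2 ≤ u) (hv : 2 ≤ v) (hw : 1 < w) (hb : 1 ≤ b)
    (huv : Nat.gcd u v = 1)
    (x : Fin 4 → ℕ) (hx : x = ![1, u, v, u * v * w]) :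
    (∀ i j : Fin 4,
        ∃ m : ℤ,
          ((Matrix.of fun i j : Fin 4 => ((Nat.gcd (x i) (x j) : ℚ)))⁻¹ *
            (Matrix.of fun i j : Fin 4 => ((Nat.gcd (x i) (x j) : ℚ)) ^ b)) i j = (m : ℚ)) ↔
      ((u : ℤ) * v * w - u - v + 1) ∣ (((u : ℤ) * v * w) ^ b - (u : ℤ) ^ b - (v : ℤ) ^ b + 1) := by
  subst hx
  have gvu : Nat.gcd v u = 1 := Nat.gcd_comm u v ▸ huv
  have guw : Nat.gcd u (u * v * w) = u := Nat.gcd_eq_left ⟨v * w, by ring⟩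
  have gwu : Nat.gcd (u * v * w) u = u := Nat.gcd_eq_right ⟨v * w, by ring⟩
  have gvw : Nat.gcd v (u * v * w) = v := Nat.gcd_eq_left ⟨u * w, by ring⟩
  have gwv : Nat.gcd (u * v * w) v = v := Nat.gcd_eq_right ⟨u * w, by ring⟩
  have hG : (Matrix.of fun i j : Fin 4 =>
      ((Nat.gcd (![1, u, v, u * v * w] i) (![1, u, v, u * v * w] j) : ℚ))) =
      !![1, 1, 1, 1; 1, (u:ℚ), 1, (u:ℚ); 1, 1, (v:ℚ), (v:ℚ);
         1, (u:ℚ), (v:ℚ), (u:ℚ) * v * w] := by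
    ext i j
    fin_cases i <;> fin_cases j <;>
      simp [huv, gvu, guw, gwu, gvw, gwv, Nat.gcd_self, Matrix.vecHead, Matrix.vecTail] <;>
      push_cast <;> ring
  have hGb : (Matrix.of fun i j : Fin 4 =>
      ((Nat.gcd (![1, u, v, u * v * w] i) (![1, u, v, u * v * w] j) : ℚ)) ^ b) =
      !![1, 1, 1, 1; 1, (u:ℚ)^b, 1, (u:ℚ)^b; 1, 1, (v:ℚ)^b, (v:ℚ)^b;
         1, (u:ℚ)^b, (v:ℚ)^b, ((u:ℚ) * v * w)^b] := by
    ext i j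
    fin_cases i <;> fin_cases j <;>
      simp [huv, gvu, guw, gwu, gvw, gwv, Nat.gcd_self, Matrix.vecHead, Matrix.vecTail] <;>
      push_cast <;> ring
  have h2u : (2:ℚ) ≤ (u:ℚ) := by exact_mod_cast hu
  have h2v : (2:ℚ) ≤ (v:ℚ) := by exact_mod_cast hv
  have h2w : (2:ℚ) ≤ (w:ℚ) := by exact_mod_cast hw
  have ha : ((u:ℚ) - 1) ≠ 0 := by intro h; nlinarith
  have hc : ((v:ℚ) - 1) ≠ 0 := by intro h; nlinarith
  have hdpos : (0:ℚ) < (u:ℚ) * v * w - u - v + 1 := by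
    have h1 : (1:ℚ) ≤ ((u:ℚ) - 1) * ((v:ℚ) - 1) := by nlinarith
    have huv0 : (0:ℚ) < (u:ℚ) * v := by positivity
    have h2 : (u:ℚ) * v ≤ (u:ℚ) * v * w := by nlinarith
    nlinarith
  have hd : ((u:ℚ) * v * w - u - v + 1) ≠ 0 := ne_of_gt hdpos
  have hinv := Matrix.inv_eq_left_inv (inv4_aux (u:ℚ) (v:ℚ) (w:ℚ) ha hc hd)
  have hM := prod4_aux (u:ℚ) (v:ℚ) (w:ℚ) ((u:ℚ)^b) ((v:ℚ)^b) (((u:ℚ)*v*w)^b) ha hc hd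
  rw [hG, hGb, hinv, hM]
  have hαZ : ((u:ℚ)^b - 1)/((u:ℚ)-1) = ((∑ i ∈ Finset.range b, (u:ℤ)^i : ℤ) : ℚ) := by
    rw [div_eq_iff ha]
    push_cast
    rw [geom_sum_mul]
  have hβZ : ((v:ℚ)^b - 1)/((v:ℚ)-1) = ((∑ i ∈ Finset.range b, (v:ℤ)^i : ℤ) : ℚ) := by
    rw [div_eq_iff hc]
    push_cast
    rw [geom_sum_mul]
  constructor
  · intro h
    obtain ⟨m, hm⟩ := h 3 3
    simp [Matrix.vecHead, Matrix.vecTail] at hm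
    refine ⟨m, ?_⟩
    rw [div_eq_iff hd] at hm
    have : (((u:ℚ) * v * w)^b - (u:ℚ)^b - (v:ℚ)^b + 1) = ((u:ℚ) * v * w - u - v + 1) * m := by
      linarith [hm]
    exact_mod_cast this
  · rintro ⟨k, hk⟩
    have hδZ : (((u:ℚ)*v*w)^b - (u:ℚ)^b - (v:ℚ)^b + 1)/((u:ℚ)*v*w - u - v + 1) = (k : ℚ) := by
      rw [div_eq_iff hd]
      have : ((((u:ℤ) * v * w) ^ b - (u:ℤ) ^ b - (v:ℤ) ^ b + 1 : ℤ) : ℚ) =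
          (((u:ℤ) * v * w - u - v + 1 : ℤ) : ℚ) * (k : ℚ) := by
        rw [← Int.cast_mul, ← hk]
      push_cast at this
      linarith [this]
    intro i j
    fin_cases i <;> fin_cases j <;>
      [ exact ⟨1, by norm_num⟩;
        exact ⟨1 - ∑ i ∈ Finset.range b, (u:ℤ)^i,
          by simp [Matrix.vecHead, Matrix.vecTail, hαZ] <;> (push_cast; ring)⟩;
        exact ⟨1 - ∑ i ∈ Finset.range b, (v:ℤ)^i,
          by simp [Matrix.vecHead, Matrix.vecTail, hβZ] <;> (push_cast; ring)⟩;
        exact ⟨1 - (∑ i ∈ Finset.range b, (u:ℤ)^i) - (∑ i ∈ Finset.range b, (v:ℤ)^i) + k,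
          by simp [Matrix.vecHead, Matrix.vecTail, hαZ, hβZ, hδZ] <;> (push_cast; ring)⟩;
        exact ⟨0, by norm_num⟩;
        exact ⟨∑ i ∈ Finset.range b, (u:ℤ)^i,
          by simp [Matrix.vecHead, Matrix.vecTail, hαZ]⟩;
        exact ⟨0, by norm_num⟩;
        exact ⟨(∑ i ∈ Finset.range b, (u:ℤ)^i) - k,
          by simp [Matrix.vecHead, Matrix.vecTail, hαZ, hδZ] <;> (push_cast; ring)⟩;
        exact ⟨0, by norm_num⟩;
        exact ⟨0, by norm_num⟩;
        exact ⟨∑ i ∈ Finset.range b, (v:ℤ)^i,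
          by simp [Matrix.vecHead, Matrix.vecTail, hβZ]⟩;
        exact ⟨(∑ i ∈ Finset.range b, (v:ℤ)^i) - k,
          by simp [Matrix.vecHead, Matrix.vecTail, hβZ, hδZ] <;> (push_cast; ring)⟩;
        exact ⟨0, by norm_num⟩;
        exact ⟨0, by norm_num⟩;
        exact ⟨0, by norm_num⟩;
        exact ⟨k, by simp [Matrix.vecHead, Matrix.vecTail, hδZ]⟩ ]
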